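/- For every real number x ≥ 1, ∑_{n ≤ x} (λ_3 ⋆ 𝟏)(n) = ⌊x^{1/3}⌋. -/

import Mathlib

instance : Fact (Nat.Prime 3) := ⟨by norm_num⟩

/-- `λ_3(n) = (τ(n)/3)` as a real number. -/
noncomputable def lam3 (n : ℕ) : ℝ :=
  (legendreSym 3 (n.divisors.card : ℤ) : ℝ)

open Finset ArithmeticFunction
open scoped Classical
open scoped ArithmeticFunction.zeta

noncomputable def chi3 (m : ℕ) : ℝ := (legendreSym 3 (m : ℤ) : ℝ)

lemma chi3_mod (m : ℕ) : chi3 m = chi3 (m % 3) := by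
  unfold chi3
  rw [legendreSym.mod 3 (m : ℤ)]
  norm_cast

lemma chi3_zero : chi3 0 = 0 := by simp [chi3, legendreSym.at_zero]

lemma chi3_one : chi3 1 = 1 := by
  have : legendreSym 3 1 = 1 := by decide
  simp [chi3, this]

lemma chi3_two : chi3 2 = -1 := by
  have : legendreSym 3 2 = -1 := by decide
  simp [chi3, this]

lemma lam3_prime_pow {p : ℕ} (hp : p.Prime) (j : ℕ) : lam3 (p ^ j) = chi3 (j + 1) := by
  unfold lam3 chi3
  rw [Nat.divisors_prime_pow hp]
  simp

noncomputable def L3 : ArithmeticFunction ℝ :=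
  ⟨fun n => lam3 n, by simp [lam3, legendreSym.at_zero]⟩

lemma L3_mult : L3.IsMultiplicative := by
  constructor
  · show lam3 1 = 1
    unfold lam3
    norm_num
  · intro m n hmn
    show lam3 (m * n) = lam3 m * lam3 n
    unfold lam3
    rw [hmn.card_divisors_mul]
    push_cast
    rw [legendreSym.mul]
    push_cast
    ring

lemma sum_chi3 (k : ℕ) :
    ∑ j ∈ range (k + 1), chi3 (j + 1) = if k % 3 = 0 then 1 else 0 := by
  induction k with
  | zero => simpa using chi3_one
  | succ k ih =>
    rw [Finset.sum_range_succ, ih, chi3_mod (k + 1 + 1)]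
    have h : k % 3 = 0 ∨ k % 3 = 1 ∨ k % 3 = 2 := by omega
    rcases h with h | h | h
    · have h1 : (k + 1 + 1) % 3 = 2 := by omega
      have h2 : (k + 1) % 3 = 1 := by omega
      rw [h1, chi3_two, h2, if_pos h, if_neg (by omega)]
      ring
    · have h1 : (k + 1 + 1) % 3 = 0 := by omega
      have h2 : (k + 1) % 3 = 2 := by omega
      rw [h1, chi3_zero, h2, if_neg (by omega), if_neg (by omega)]
      ring
    · have h1 : (k + 1 + 1) % 3 = 1 := by omega
      have h2 : (k + 1) % 3 = 0 := by omega
      rw [h1, chi3_one, h2, if_neg (by omega), if_pos rfl]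
      ring

lemma sum_divisors_lam3_prime_pow {p : ℕ} (hp : p.Prime) (k : ℕ) :
    ∑ d ∈ (p ^ k).divisors, lam3 d = if 3 ∣ k then 1 else 0 := by
  rw [Nat.sum_divisors_prime_pow hp]
  have : ∀ j ∈ range (k + 1), lam3 (p ^ j) = chi3 (j + 1) :=
    fun j _ => lam3_prime_pow hp j
  rw [Finset.sum_congr rfl this, sum_chi3]
  congr 1
  simp [Nat.dvd_iff_mod_eq_zero]

lemma cube_iff {n : ℕ} (hn : n ≠ 0) :
    (∃ m, m ^ 3 = n) ↔ ∀ p, 3 ∣ n.factorization p := by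
  constructor
  · rintro ⟨m, rfl⟩ p
    rw [Nat.factorization_pow]
    exact ⟨m.factorization p, by simp [mul_comm]⟩
  · intro h
    refine ⟨n.factorization.prod fun p k => p ^ (k / 3), ?_⟩
    have step : (n.factorization.prod fun p k => p ^ (k / 3)) ^ 3
        = n.factorization.prod fun p k => p ^ k := by
      rw [Finsupp.prod, Finsupp.prod, ← Finset.prod_pow]
      exact Finset.prod_congr rfl fun p _ => by
        rw [← pow_mul, Nat.div_mul_cancel (h p)]
    rw [step]
    exact Nat.factorization_prod_pow_eq_self hn

lemma key {n : ℕ} (hn : n ≠ 0) :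
    ∑ d ∈ n.divisors, lam3 d = if ∃ m, m ^ 3 = n then 1 else 0 := by
  have hF : ∑ d ∈ n.divisors, lam3 d = (L3 * (ζ : ArithmeticFunction ℝ)) n := by
    rw [coe_mul_zeta_apply]; rfl
  have hmult := L3_mult.mul isMultiplicative_zeta.natCast
  rw [hF, hmult.multiplicative_factorization _ hn]
  have heach : ∀ p ∈ n.factorization.support,
      (L3 * (ζ : ArithmeticFunction ℝ)) (p ^ n.factorization p)
        = if 3 ∣ n.factorization p then 1 else 0 := by
    intro p hp
    have hpp : p.Prime := Nat.prime_of_mem_primeFactors (by rwa [Nat.support_factorization] at hp)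
    rw [coe_mul_zeta_apply]
    exact sum_divisors_lam3_prime_pow hpp _
  rw [Finsupp.prod, Finset.prod_congr rfl heach]
  by_cases hcube : ∃ m, m ^ 3 = n
  · rw [if_pos hcube]
    apply Finset.prod_eq_one
    intro p _
    rw [if_pos (((cube_iff hn).1 hcube) p)]
  · rw [if_neg hcube]
    have hex : ∃ p ∈ n.factorization.support, ¬ 3 ∣ n.factorization p := by
      by_contra hcon
      push_neg at hcon
      apply hcube
      rw [cube_iff hn]
      intro p
      by_cases hps : p ∈ n.factorization.support
      · exact hcon p hps
      · simp [Finsupp.notMem_support_iff.1 hps]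
    obtain ⟨p, hps, hnd⟩ := hex
    exact Finset.prod_eq_zero hps (by rw [if_neg hnd])

lemma cube_le_iff {x : ℝ} (hx : 1 ≤ x) (m : ℕ) :
    m ≤ ⌊x ^ ((1 : ℝ) / 3)⌋₊ ↔ m ^ 3 ≤ ⌊x⌋₊ := by
  have hx0 : (0 : ℝ) ≤ x := by linarith
  have h1 : (0 : ℝ) ≤ x ^ ((1 : ℝ) / 3) := Real.rpow_nonneg hx0 _
  rw [Nat.le_floor_iff h1, Nat.le_floor_iff hx0]
  have hkey : (x ^ ((1 : ℝ) / 3)) ^ (3 : ℕ) = x := by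
    rw [← Real.rpow_natCast (x ^ ((1:ℝ)/3)) 3, ← Real.rpow_mul hx0]
    norm_num
  constructor
  · intro h
    have := pow_le_pow_left₀ (Nat.cast_nonneg m) h 3
    rw [hkey] at this
    calc ((m ^ 3 : ℕ) : ℝ) = (m : ℝ) ^ (3 : ℕ) := by push_cast; ring
      _ ≤ x := this
  · intro h
    have h' : ((m : ℝ)) ^ (3 : ℕ) ≤ (x ^ ((1:ℝ)/3)) ^ (3 : ℕ) := by
      rw [hkey]; calc ((m : ℝ)) ^ (3:ℕ) = ((m ^ 3 : ℕ) : ℝ) := by push_cast; ring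
        _ ≤ x := h
    exact le_of_pow_le_pow_left₀ (by norm_num) h1 h'

theorem sum_lam3_conv_one (x : ℝ) (hx : 1 ≤ x) :
    ∑ n ∈ Finset.Icc 1 ⌊x⌋₊, ∑ d ∈ n.divisors, lam3 d =
      (⌊x ^ ((1 : ℝ) / 3)⌋₊ : ℝ) := by
  classical
  set N := ⌊x⌋₊ with hN
  set K := ⌊x ^ ((1 : ℝ) / 3)⌋₊ with hK
  have step1 : ∀ n ∈ Finset.Icc 1 N, ∑ d ∈ n.divisors, lam3 d
      = if ∃ m, m ^ 3 = n then (1 : ℝ) else 0 := by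
    intro n hn
    rw [Finset.mem_Icc] at hn
    exact key (by omega)
  rw [Finset.sum_congr rfl step1, @Finset.sum_boole _ ℝ _ (fun n => ∃ m, m ^ 3 = n) (fun _ => Classical.propDecidable _)]
  have himg : (Finset.Icc 1 N).filter (fun n => ∃ m, m ^ 3 = n)
      = (Finset.Icc 1 K).image (fun m => m ^ 3) := by
    ext n
    simp only [Finset.mem_filter, Finset.mem_image, Finset.mem_Icc]
    constructor
    · rintro ⟨⟨h1, h2⟩, m, rfl⟩
      refine ⟨m, ⟨?_, (cube_le_iff hx m).2 h2⟩, rfl⟩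
      by_contra hm
      interval_cases m <;> omega
    · rintro ⟨m, ⟨hm1, hm2⟩, rfl⟩
      refine ⟨⟨?_, (cube_le_iff hx m).1 hm2⟩, m, rfl⟩
      exact Nat.one_le_iff_ne_zero.2 (by positivity)
  rw [Finset.filter_congr_decidable, himg, Finset.card_image_of_injective _ (fun a b hab => by
    exact Nat.pow_left_injective (by norm_num) hab), Nat.card_Icc]
  simp
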